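/- Let m ≥ 1, let k ≥ 2 be even, and let G be the disjoint union of two complete graphs C_1 and C_2, each on m vertices. Let e_1, …, e_{k/2} be the standard basis of ℝ^{k/2}. For each vertex u and index i ∈ {1,…,k}, define ū_{u,i} = √(2/k)·e_i if u ∈ C_1 and i ≤ k/2, ū_{u,i} = √(2/k)·e_{i−k/2} if u ∈ C_2 and i > k/2, and ū_{u,i} = 0 otherwise; define I = √(2/k)·∑_{i=1}^{k/2} e_i. Then: (a) ∑_{i=1}^k ‖ū_{u,i}‖² = 1 for every vertex u; (b) ⟨ū_{u,i}, ū_{u,j}⟩ = 0 for every vertex u and all i ≠ j; (c) ⟨∑_{i=1}^k ū_{u,i}, I⟩ = 1 for every vertex u; (d) ‖I‖² = 1; and (e) ∑_{(u,v)∈E} ‖ū_{u,i} − ū_{v,i}‖² = 0 for every i ∈ {1,…,k}. -/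

import Mathlib

open Finset
open scoped RealInnerProductSpace

/-- The disjoint union of two complete graphs, each on `m` vertices: vertices are pairs
`(c, x)` with `c ∈ Fin 2` the clique index (`c = 0` for `C₁`, `c = 1` for `C₂`), and two
distinct vertices are adjacent iff they lie in the same clique. -/
def twoCliques (m : ℕ) : SimpleGraph (Fin 2 × Fin m) where
  Adj p q := p ≠ q ∧ p.1 = q.1
  symm := by constructor; intro p q h; exact ⟨h.1.symm, h.2.symm⟩
  loopless := by constructor; intro p h; exact h.1 rfl

instance (m : ℕ) : DecidableRel (twoCliques m).Adj :=
  fun p q => inferInstanceAs (Decidable (p ≠ q ∧ p.1 = q.1))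

/-- The assignment-SDP solution, with `k = 2l`: `ū_{u,i} = √(2/k)·e_i` if `u ∈ C₁` and
`i ≤ k/2`; `ū_{u,i} = √(2/k)·e_{i−k/2}` if `u ∈ C₂` and `i > k/2`; and `ū_{u,i} = 0`
otherwise. -/
noncomputable def ubarAssign (m l : ℕ) (u : Fin 2 × Fin m) (i : Fin (2 * l)) :
    EuclideanSpace ℝ (Fin l) :=
  if h : u.1 = 0 ∧ (i : ℕ) < l then
    Real.sqrt (2 / (2 * l)) • EuclideanSpace.single ⟨(i : ℕ), h.2⟩ 1
  else if h' : u.1 = 1 ∧ l ≤ (i : ℕ) then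
    Real.sqrt (2 / (2 * l)) • EuclideanSpace.single ⟨(i : ℕ) - l, by have := i.isLt; omega⟩ 1
  else 0

/-- The vector `I = √(2/k)·∑_{i=1}^{k/2} e_i`, with `k = 2l`. -/
noncomputable def Ivec (l : ℕ) : EuclideanSpace ℝ (Fin l) :=
  Real.sqrt (2 / (2 * l)) • ∑ j : Fin l, EuclideanSpace.single j 1

lemma sqrt_mul_self' (l : ℕ) (hl : 1 ≤ l) :
    Real.sqrt (2 / (2 * l)) * Real.sqrt (2 / (2 * l)) = 1 / (l : ℝ) := by
  rw [Real.mul_self_sqrt (by positivity)]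
  have : (l : ℝ) ≠ 0 := by positivity
  field_simp

lemma norm_smul_single_sq (l : ℕ) (hl : 1 ≤ l) (j : Fin l) :
    ‖Real.sqrt (2 / (2 * l)) • EuclideanSpace.single j (1 : ℝ)‖ ^ 2 = 1 / (l : ℝ) := by
  rw [norm_smul, EuclideanSpace.norm_single, norm_one, mul_one, Real.norm_eq_abs,
    abs_of_nonneg (Real.sqrt_nonneg _), sq, sqrt_mul_self' l hl]

lemma inner_sum_single (l : ℕ) (j : Fin l) :
    ⟪EuclideanSpace.single j (1 : ℝ), ∑ j' : Fin l, EuclideanSpace.single j' (1 : ℝ)⟫ = 1 := by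
  rw [inner_sum]
  simp only [EuclideanSpace.inner_single_left, conj_trivial, one_mul,
    EuclideanSpace.single_apply]
  rw [Finset.sum_ite_eq univ j (fun _ => (1 : ℝ))]
  simp

lemma inner_smul_single_Ivec (l : ℕ) (hl : 1 ≤ l) (j : Fin l) :
    ⟪Real.sqrt (2 / (2 * l)) • EuclideanSpace.single j (1 : ℝ), Ivec l⟫ = 1 / (l : ℝ) := by
  rw [Ivec, real_inner_smul_left, real_inner_smul_right, inner_sum_single, mul_one,
    sqrt_mul_self' l hl]

lemma inner_smul_single_smul_single (l : ℕ) (c : ℝ) (a b : Fin l) (hab : ¬ a = b) :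
    ⟪c • EuclideanSpace.single a (1 : ℝ), c • EuclideanSpace.single b (1 : ℝ)⟫ = 0 := by
  rw [real_inner_smul_left, real_inner_smul_right, EuclideanSpace.inner_single_left]
  simp [EuclideanSpace.single_apply, hab]

lemma norm_ubar_sq (m l : ℕ) (hl : 1 ≤ l) (u : Fin 2 × Fin m) (i : Fin (2 * l)) :
    ‖ubarAssign m l u i‖ ^ 2 =
      if (u.1 = 0 ∧ (i : ℕ) < l) ∨ (u.1 = 1 ∧ l ≤ (i : ℕ)) then 1 / (l : ℝ) else 0 := by
  unfold ubarAssign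
  by_cases h1 : u.1 = 0 ∧ (i : ℕ) < l
  · rw [dif_pos h1, if_pos (Or.inl h1)]; exact norm_smul_single_sq l hl _
  · rw [dif_neg h1]
    by_cases h2 : u.1 = 1 ∧ l ≤ (i : ℕ)
    · rw [dif_pos h2, if_pos (Or.inr h2)]; exact norm_smul_single_sq l hl _
    · rw [dif_neg h2, if_neg (by tauto)]; simp

lemma inner_ubar_Ivec (m l : ℕ) (hl : 1 ≤ l) (u : Fin 2 × Fin m) (i : Fin (2 * l)) :
    ⟪ubarAssign m l u i, Ivec l⟫ =
      if (u.1 = 0 ∧ (i : ℕ) < l) ∨ (u.1 = 1 ∧ l ≤ (i : ℕ)) then 1 / (l : ℝ) else 0 := by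
  unfold ubarAssign
  by_cases h1 : u.1 = 0 ∧ (i : ℕ) < l
  · rw [dif_pos h1, if_pos (Or.inl h1)]; exact inner_smul_single_Ivec l hl _
  · rw [dif_neg h1]
    by_cases h2 : u.1 = 1 ∧ l ≤ (i : ℕ)
    · rw [dif_pos h2, if_pos (Or.inr h2)]; exact inner_smul_single_Ivec l hl _
    · rw [dif_neg h2, if_neg (by tauto)]; simp

lemma count0 (l : ℕ) (hl : 1 ≤ l) :
    ∑ i : Fin (2 * l), (if (i : ℕ) < l then 1 / (l : ℝ) else 0) = 1 := by
  have hl' : (l : ℝ) ≠ 0 := by positivity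
  rw [Fin.sum_univ_eq_sum_range (fun j => if j < l then 1 / (l : ℝ) else 0)]
  rw [← Finset.sum_filter]
  have h : (Finset.range (2 * l)).filter (· < l) = Finset.range l := by
    ext x; simp; omega
  rw [h, Finset.sum_const, Finset.card_range, nsmul_eq_mul]
  field_simp

lemma count1 (l : ℕ) (hl : 1 ≤ l) :
    ∑ i : Fin (2 * l), (if l ≤ (i : ℕ) then 1 / (l : ℝ) else 0) = 1 := by
  have hl' : (l : ℝ) ≠ 0 := by positivity
  rw [Fin.sum_univ_eq_sum_range (fun j => if l ≤ j then 1 / (l : ℝ) else 0)]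
  rw [← Finset.sum_filter]
  have h : (Finset.range (2 * l)).filter (l ≤ ·) = Finset.Ico l (2 * l) := by
    ext x; simp [Finset.mem_Ico]; omega
  rw [h, Finset.sum_const, Nat.card_Ico, show 2 * l - l = l by omega, nsmul_eq_mul]
  field_simp

lemma count_sum (l : ℕ) (hl : 1 ≤ l) (c : Fin 2) :
    ∑ i : Fin (2 * l),
      (if (c = 0 ∧ (i : ℕ) < l) ∨ (c = 1 ∧ l ≤ (i : ℕ)) then 1 / (l : ℝ) else 0) = 1 := by
  have hc : c = 0 ∨ c = 1 := by
    rcases c with ⟨(_ | _ | n), h⟩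
    · exact Or.inl rfl
    · exact Or.inr rfl
    · omega
  obtain rfl | rfl := hc
  · simp only [eq_self_iff_true, true_and, Fin.zero_eq_one_iff,
      eq_false (by omega : ¬(2 : ℕ) = 1), false_and, or_false]
    exact count0 l hl
  · simp only [eq_self_iff_true, true_and, Fin.one_eq_zero_iff,
      eq_false (by omega : ¬(2 : ℕ) = 1), false_and, false_or]
    exact count1 l hl

lemma ubar_congr (m l : ℕ) (u v : Fin 2 × Fin m) (h : u.1 = v.1) (i : Fin (2 * l)) :
    ubarAssign m l u i = ubarAssign m l v i := by
  obtain ⟨a, x⟩ := u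
  obtain ⟨b, y⟩ := v
  dsimp at h
  subst h
  rfl

theorem stmt17 (m l : ℕ) (hm : 1 ≤ m) (hl : 1 ≤ l) :
    -- (a) unit total length
    (∀ u : Fin 2 × Fin m, ∑ i : Fin (2 * l), ‖ubarAssign m l u i‖ ^ 2 = 1) ∧
    -- (b) orthogonality
    (∀ u : Fin 2 × Fin m, ∀ i j : Fin (2 * l), i ≠ j →
      ⟪ubarAssign m l u i, ubarAssign m l u j⟫ = 0) ∧
    -- (c) ⟨∑ᵢ ū_{u,i}, I⟩ = 1
    (∀ u : Fin 2 × Fin m, ⟪∑ i : Fin (2 * l), ubarAssign m l u i, Ivec l⟫ = 1) ∧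
    -- (d) ‖I‖² = 1
    (‖Ivec l‖ ^ 2 = 1) ∧
    -- (e) objective value 0
    (∀ i : Fin (2 * l),
      ∑ e ∈ (twoCliques m).edgeFinset,
        Sym2.lift ⟨fun u v => ‖ubarAssign m l u i - ubarAssign m l v i‖ ^ 2,
          by intro u v; dsimp only; rw [norm_sub_rev]⟩ e = 0) := by
  refine ⟨?_, ?_, ?_, ?_, ?_⟩
  · intro u
    rw [Finset.sum_congr rfl fun i _ => norm_ubar_sq m l hl u i]
    exact count_sum l hl u.1
  · intro u i j hij
    have hij' : (i : ℕ) ≠ (j : ℕ) := fun h => hij (Fin.ext h)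
    unfold ubarAssign
    split_ifs with h1 h2 h3 h4 h5 h6 <;>
      first
        | (simp; done)
        | (exfalso; simp_all; done)
        | (apply inner_smul_single_smul_single
           simp only [ne_eq, Fin.mk.injEq]
           omega)
  · intro u
    rw [sum_inner, Finset.sum_congr rfl fun i _ => inner_ubar_Ivec m l hl u i]
    exact count_sum l hl u.1
  · rw [← real_inner_self_eq_norm_sq, Ivec, real_inner_smul_left, real_inner_smul_right,
      sum_inner]
    rw [Finset.sum_congr rfl fun j _ => inner_sum_single l j, Finset.sum_const,
      Finset.card_univ, Fintype.card_fin, nsmul_eq_mul, mul_one, ← mul_assoc,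
      sqrt_mul_self' l hl]
    have : (l : ℝ) ≠ 0 := by positivity
    field_simp
  · intro i
    apply Finset.sum_eq_zero
    intro e he
    induction e using Sym2.ind with
    | _ u v =>
      rw [SimpleGraph.mem_edgeFinset, SimpleGraph.mem_edgeSet] at he
      rw [Sym2.lift_mk]
      dsimp only
      rw [ubar_congr m l u v he.2, sub_self, norm_zero]
      ring
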